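/- Let G = {(s,x) : s ∈ ℝ, s > 0, x ∈ ℝ} with the product (s,x)(t,y) = (st, x + sy) (the connected component of the identity of the affine group of the real line), and consider the subgroups G₁ = {(g,0) : g > 0} and G₂ = {(s, s−1) : s > 0}. Then the product set G₁G₂ equals {(t,x) : t > 0, x < t}; in particular G₁G₂ is not dense in G. -/

import Mathlib

/-- In the connected affine group of the real line, realized as
`G = ℝ_{>0} × ℝ` with product `(s,x)(t,y) = (st, x + sy)`, the product of the
subgroups `G₁ = {(g,0) : g > 0}` and `G₂ = {(s, s−1) : s > 0}` equals
`{(t,x) : t > 0, x < t}`; in particular `G₁G₂` is not dense in `G`. -/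
theorem affine_group_product_not_dense
    (mul : ℝ × ℝ → ℝ × ℝ → ℝ × ℝ)
    (hmul : ∀ s x t y : ℝ, mul (s, x) (t, y) = (s * t, x + s * y))
    (G1 G2 : Set (ℝ × ℝ))
    (hG1 : G1 = {p | 0 < p.1 ∧ p.2 = 0})
    (hG2 : G2 = {p | 0 < p.1 ∧ p.2 = p.1 - 1}) :
    Set.image2 mul G1 G2 = {p | 0 < p.1 ∧ p.2 < p.1} ∧
    ¬ ({p : ℝ × ℝ | 0 < p.1} ⊆ closure (Set.image2 mul G1 G2)) := by
  have himg : Set.image2 mul G1 G2 = {p : ℝ × ℝ | 0 < p.1 ∧ p.2 < p.1} := by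
    ext ⟨t, x⟩
    simp only [Set.mem_image2, hG1, hG2, Set.mem_setOf_eq]
    constructor
    · rintro ⟨⟨g, z⟩, ⟨hg, hz⟩, ⟨s, y⟩, ⟨hs, hy⟩, heq⟩
      simp only at hz hy
      subst hz hy
      rw [hmul] at heq
      obtain ⟨h1, h2⟩ := Prod.mk.injEq .. ▸ heq
      subst h1 h2
      constructor
      · positivity
      · nlinarith
    · rintro ⟨ht, hx⟩
      have hg : (0:ℝ) < t - x := by linarith
      refine ⟨(t - x, 0), ⟨hg, rfl⟩, (t / (t - x), t / (t - x) - 1),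
        ⟨div_pos ht hg, rfl⟩, ?_⟩
      rw [hmul]
      have h : t - x ≠ 0 := by linarith
      field_simp
      simp
  refine ⟨himg, fun h => ?_⟩
  have hmem : ((1 : ℝ), (2 : ℝ)) ∈ closure (Set.image2 mul G1 G2) :=
    h (by norm_num)
  rw [himg] at hmem
  have hsub : {p : ℝ × ℝ | 0 < p.1 ∧ p.2 < p.1} ⊆ {p : ℝ × ℝ | p.2 ≤ p.1} :=
    fun p hp => le_of_lt hp.2
  have hclosed : IsClosed {p : ℝ × ℝ | p.2 ≤ p.1} :=
    isClosed_le continuous_snd continuous_fst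
  have := (closure_minimal hsub hclosed) hmem
  simp only [Set.mem_setOf_eq] at this
  linarith
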